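/- The function f(u) = ∫_{-u}^∞ (z+u) e^{-z²/2} dz satisfies: f(u)/u is non-increasing for u > 0. -/

import Mathlib

open Real MeasureTheory Set Filter

lemma int_gauss : Integrable (fun z : ℝ => Real.exp (-z^2 / 2)) := by
  have h := integrable_exp_neg_mul_sq (by norm_num : (0:ℝ) < 1/2)
  convert h using 2 with z
  ring_nf

lemma int_zgauss : Integrable (fun z : ℝ => z * Real.exp (-z^2 / 2)) := by
  have h := integrable_mul_exp_neg_mul_sq (by norm_num : (0:ℝ) < 1/2)
  convert h using 2 with z
  ring_nf

lemma hasDerivAt_negexp (x : ℝ) :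
    HasDerivAt (fun z : ℝ => -Real.exp (-z^2 / 2)) (x * Real.exp (-x^2 / 2)) x := by
  have h1 : HasDerivAt (fun z : ℝ => -z^2 / 2) (-x) x := by
    have h := ((hasDerivAt_pow 2 x).neg).div_const 2
    refine h.congr_deriv ?_
    simp; ring
  have h2 := (h1.exp).neg
  refine h2.congr_deriv ?_
  ring

lemma tendsto_negexp : Tendsto (fun z : ℝ => -Real.exp (-z^2 / 2)) atTop (nhds 0) := by
  rw [show (0:ℝ) = -0 by ring]
  apply Tendsto.neg
  apply Real.tendsto_exp_atBot.comp
  apply Tendsto.atBot_div_const (by norm_num : (0:ℝ) < 2)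
  apply tendsto_neg_atBot_iff.mpr
  exact tendsto_pow_atTop (by norm_num)

lemma int_C (u : ℝ) : ∫ z in Set.Ioi (-u), z * Real.exp (-z^2 / 2) = Real.exp (-u^2 / 2) := by
  have h := integral_Ioi_of_hasDerivAt_of_tendsto'
    (f := fun z : ℝ => -Real.exp (-z^2 / 2)) (f' := fun z : ℝ => z * Real.exp (-z^2 / 2))
    (a := -u) (fun x _ => hasDerivAt_negexp x) int_zgauss.integrableOn tendsto_negexp
  rw [h]
  simp [neg_sq]

lemma split_Ioi (u : ℝ) (hu : 0 < u) :
    ∫ z in Set.Ioi (-u), Real.exp (-z^2 / 2)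
      = (∫ z in (-u)..0, Real.exp (-z^2 / 2)) + ∫ z in Set.Ioi (0:ℝ), Real.exp (-z^2 / 2) := by
  rw [intervalIntegral.integral_of_le (by linarith),
    ← setIntegral_union (Set.Ioc_disjoint_Ioi le_rfl) measurableSet_Ioi
      int_gauss.integrableOn int_gauss.integrableOn,
    Set.Ioc_union_Ioi_eq_Ioi (by linarith)]

noncomputable def g (u : ℝ) : ℝ :=
  (∫ z in (-u)..0, Real.exp (-z^2 / 2)) + (∫ z in Set.Ioi (0:ℝ), Real.exp (-z^2 / 2))
    + Real.exp (-u^2 / 2) / u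

lemma f_eq_g (u : ℝ) (hu : 0 < u) :
    (∫ z in Set.Ioi (-u), (z + u) * Real.exp (-z^2 / 2)) / u = g u := by
  have hsplit : (∫ z in Set.Ioi (-u), (z + u) * Real.exp (-z^2 / 2))
      = (∫ z in Set.Ioi (-u), z * Real.exp (-z^2 / 2))
        + u * ∫ z in Set.Ioi (-u), Real.exp (-z^2 / 2) := by
    rw [← MeasureTheory.integral_const_mul, ← MeasureTheory.integral_add
      int_zgauss.integrableOn ((int_gauss.integrableOn).const_mul u)]
    congr 1; ext z; ring
  rw [hsplit, int_C, split_Ioi u hu, g]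
  field_simp
  ring

lemma hasDerivAt_g (u : ℝ) (hu : 0 < u) :
    HasDerivAt g (-Real.exp (-u^2 / 2) / u^2) u := by
  have h1 : HasDerivAt (fun v : ℝ => ∫ z in (-v)..0, Real.exp (-z^2 / 2))
      (Real.exp (-u^2 / 2)) u := by
    have hint : IntervalIntegrable (fun z : ℝ => Real.exp (-z^2 / 2)) volume (-u) 0 :=
      int_gauss.intervalIntegrable
    have h := intervalIntegral.integral_hasDerivAt_left hint
      (int_gauss.1.stronglyMeasurableAtFilter) (Real.continuous_exp.comp (by continuity)).continuousAt
    have h' := h.comp u (hasDerivAt_neg u)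
    refine h'.congr_deriv ?_
    simp [neg_sq]
  have hnum : HasDerivAt (fun v : ℝ => Real.exp (-v^2 / 2)) (-u * Real.exp (-u^2 / 2)) u := by
    have hd : HasDerivAt (fun z : ℝ => -z^2 / 2) (-u) u := by
      have h := ((hasDerivAt_pow 2 u).neg).div_const 2
      refine h.congr_deriv ?_
      simp; ring
    have := hd.exp
    convert this using 1; ring
  have h2 := hnum.div (hasDerivAt_id u) (ne_of_gt hu)
  simp only [id_eq] at h2
  have := (h1.add_const (∫ z in Set.Ioi (0:ℝ), Real.exp (-z^2 / 2))).add h2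
  refine this.congr_deriv ?_
  have hu2 : u^2 ≠ 0 := pow_ne_zero 2 (ne_of_gt hu)
  field_simp
  ring

theorem stmt3 :
    AntitoneOn (fun u : ℝ =>
      (∫ z in Set.Ioi (-u), (z + u) * Real.exp (-z^2 / 2)) / u) (Set.Ioi 0) := by
  have hanti : AntitoneOn g (Set.Ioi 0) := by
    apply antitoneOn_of_deriv_nonpos (convex_Ioi 0)
    · exact fun u hu => (hasDerivAt_g u hu).continuousAt.continuousWithinAt
    · rw [interior_Ioi]
      exact fun u hu => (hasDerivAt_g u hu).differentiableAt.differentiableWithinAt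
    · rw [interior_Ioi]
      intro u hu
      rw [(hasDerivAt_g u hu).deriv]
      apply div_nonpos_of_nonpos_of_nonneg
      · simp [(Real.exp_pos _).le]
      · positivity
  intro a ha b hb hab
  dsimp only
  rw [f_eq_g a ha, f_eq_g b hb]
  exact hanti ha hb hab
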